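/- Let Φ₁₂, Φ₁₃, Φ₁₄, Φ₂₃, Φ₂₄ be five pairwise distinct quaternions that affinely span ℍ ≅ ℝ⁴ and that all lie on the hypersphere of centre c ∈ ℍ and radius r > 0. Suppose Φ₃₄ and Φ̃₃₄ are quaternions, each distinct from the five given points and with Φ₃₄ ≠ c, such that M(Φ₁₄, Φ₁₂, Φ₂₄, Φ₂₃, Φ₃₄, Φ₁₃) = −1 and M̃(Φ₁₄, Φ₁₂, Φ₂₄, Φ₂₃, Φ̃₃₄, Φ₁₃) = −1. Then Φ̃₃₄ is the inverse of Φ₃₄ with respect to that hypersphere: Φ̃₃₄ = c + (r²/‖Φ₃₄ − c‖²)·(Φ₃₄ − c). -/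

import Mathlib

/-- Right multi-ratio of six quaternions. -/
noncomputable def rightMultiRatio (P₁ P₂ P₃ P₄ P₅ P₆ : Quaternion ℝ) : Quaternion ℝ :=
  (P₁ - P₂) * (P₂ - P₃)⁻¹ * (P₃ - P₄) * (P₄ - P₅)⁻¹ * (P₅ - P₆) * (P₆ - P₁)⁻¹

/-- Left multi-ratio of six quaternions. -/
noncomputable def leftMultiRatio (P₁ P₂ P₃ P₄ P₅ P₆ : Quaternion ℝ) : Quaternion ℝ :=
  (P₁ - P₆)⁻¹ * (P₆ - P₅) * (P₅ - P₄)⁻¹ * (P₄ - P₃) * (P₃ - P₂)⁻¹ * (P₂ - P₁)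

section Aux

-- in-file specialized star lemmas, to keep a single instance world
private lemma qstar_mul (a b : Quaternion ℝ) : star (a * b) = star b * star a := star_mul a b

private lemma qstar_inv (a : Quaternion ℝ) : star a⁻¹ = (star a)⁻¹ := star_inv₀ a

private lemma qstar_sub (a b : Quaternion ℝ) : star (a - b) = star a - star b := star_sub a b

private lemma qstar_neg (a : Quaternion ℝ) : star (-a) = -star a := star_neg a

private lemma qstar_one : star (1 : Quaternion ℝ) = 1 := star_one _

private lemma qmul_assoc (a b c : Quaternion ℝ) : a * b * c = a * (b * c) := mul_assoc a b c

private lemma qsub_cancel (a b c : Quaternion ℝ) : (a - c) - (b - c) = a - b :=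
  sub_sub_sub_cancel_right a b c

private lemma inv_sub_inv₁ {a b : Quaternion ℝ} (ha : a ≠ 0) (hb : b ≠ 0) :
    a⁻¹ - b⁻¹ = a⁻¹ * (b - a) * b⁻¹ := by
  rw [mul_sub, sub_mul, mul_assoc, mul_inv_cancel₀ hb, mul_one, inv_mul_cancel₀ ha, one_mul]

private lemma inv_sub_inv₂ {a b : Quaternion ℝ} (ha : a ≠ 0) (hb : b ≠ 0) :
    a⁻¹ - b⁻¹ = b⁻¹ * (b - a) * a⁻¹ := by
  rw [mul_sub, sub_mul, inv_mul_cancel₀ hb, one_mul, mul_assoc, mul_inv_cancel₀ ha, mul_one]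

private lemma telescope (ρ d₁ d₂ d₃ d₄ d₅ d₆ : Quaternion ℝ) (hρ : ρ ≠ 0)
    (h₁ : d₁ ≠ 0) (h₂ : d₂ ≠ 0) (h₃ : d₃ ≠ 0) (h₄ : d₄ ≠ 0) (h₅ : d₅ ≠ 0) (h₆ : d₆ ≠ 0)
    (h : (d₆ - d₁)⁻¹ * (d₅ - d₆) * (d₄ - d₅)⁻¹ * (d₃ - d₄) * (d₂ - d₃)⁻¹ * (d₁ - d₂) = -1) :
    (ρ * d₁⁻¹ - ρ * d₆⁻¹)⁻¹ * (ρ * d₆⁻¹ - ρ * d₅⁻¹) * (ρ * d₅⁻¹ - ρ * d₄⁻¹)⁻¹ *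
      (ρ * d₄⁻¹ - ρ * d₃⁻¹) * (ρ * d₃⁻¹ - ρ * d₂⁻¹)⁻¹ * (ρ * d₂⁻¹ - ρ * d₁⁻¹) = -1 := by
  have e1 : ρ * d₁⁻¹ - ρ * d₆⁻¹ = ρ * (d₆⁻¹ * (d₆ - d₁) * d₁⁻¹) := by
    rw [← mul_sub, inv_sub_inv₂ h₁ h₆]
  have e2 : ρ * d₆⁻¹ - ρ * d₅⁻¹ = ρ * (d₆⁻¹ * (d₅ - d₆) * d₅⁻¹) := by
    rw [← mul_sub, inv_sub_inv₁ h₆ h₅]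
  have e3 : ρ * d₅⁻¹ - ρ * d₄⁻¹ = ρ * (d₄⁻¹ * (d₄ - d₅) * d₅⁻¹) := by
    rw [← mul_sub, inv_sub_inv₂ h₅ h₄]
  have e4 : ρ * d₄⁻¹ - ρ * d₃⁻¹ = ρ * (d₄⁻¹ * (d₃ - d₄) * d₃⁻¹) := by
    rw [← mul_sub, inv_sub_inv₁ h₄ h₃]
  have e5 : ρ * d₃⁻¹ - ρ * d₂⁻¹ = ρ * (d₂⁻¹ * (d₂ - d₃) * d₃⁻¹) := by
    rw [← mul_sub, inv_sub_inv₂ h₃ h₂]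
  have e6 : ρ * d₂⁻¹ - ρ * d₁⁻¹ = ρ * (d₂⁻¹ * (d₁ - d₂) * d₁⁻¹) := by
    rw [← mul_sub, inv_sub_inv₁ h₂ h₁]
  rw [e1, e2, e3, e4, e5, e6]
  have key : (ρ * (d₆⁻¹ * (d₆ - d₁) * d₁⁻¹))⁻¹ * (ρ * (d₆⁻¹ * (d₅ - d₆) * d₅⁻¹)) *
      (ρ * (d₄⁻¹ * (d₄ - d₅) * d₅⁻¹))⁻¹ * (ρ * (d₄⁻¹ * (d₃ - d₄) * d₃⁻¹)) *
      (ρ * (d₂⁻¹ * (d₂ - d₃) * d₃⁻¹))⁻¹ * (ρ * (d₂⁻¹ * (d₁ - d₂) * d₁⁻¹)) =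
      d₁ * ((d₆ - d₁)⁻¹ * (d₅ - d₆) * (d₄ - d₅)⁻¹ * (d₃ - d₄) * (d₂ - d₃)⁻¹ * (d₁ - d₂)) * d₁⁻¹ := by
    simp only [mul_inv_rev, inv_inv, mul_assoc,
      inv_mul_cancel_left₀ hρ, mul_inv_cancel_left₀ h₁, mul_inv_cancel_left₀ h₂,
      mul_inv_cancel_left₀ h₃, mul_inv_cancel_left₀ h₄, mul_inv_cancel_left₀ h₅,
      mul_inv_cancel_left₀ h₆, inv_mul_cancel_left₀ h₁, inv_mul_cancel_left₀ h₂,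
      inv_mul_cancel_left₀ h₃, inv_mul_cancel_left₀ h₄, inv_mul_cancel_left₀ h₅,
      inv_mul_cancel_left₀ h₆]
  rw [key, h, mul_neg_one, neg_mul, mul_inv_cancel₀ h₁]

private lemma unique_sol {A B C D E X Y : Quaternion ℝ} (hAE : A ≠ E) (hDC : D ≠ C) (hCB : C ≠ B)
    (hBA : B ≠ A) (hED : E ≠ D)
    (hX : (A - E)⁻¹ * (E - X) * (X - D)⁻¹ * (D - C) * (C - B)⁻¹ * (B - A) = -1)
    (hY : (A - E)⁻¹ * (E - Y) * (Y - D)⁻¹ * (D - C) * (C - B)⁻¹ * (B - A) = -1) :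
    X = Y := by
  set u : Quaternion ℝ := A - E with hu_def
  set w : Quaternion ℝ := (D - C) * (C - B)⁻¹ * (B - A) with hw_def
  have hu : u ≠ 0 := sub_ne_zero.2 hAE
  have hw : w ≠ 0 := mul_ne_zero (mul_ne_zero (sub_ne_zero.2 hDC)
    (inv_ne_zero (sub_ne_zero.2 hCB))) (sub_ne_zero.2 hBA)
  have hX' : u⁻¹ * (E - X) * (X - D)⁻¹ * w = -1 := by
    rw [hw_def, ← mul_assoc, ← mul_assoc]; exact hX
  have hY' : u⁻¹ * (E - Y) * (Y - D)⁻¹ * w = -1 := by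
    rw [hw_def, ← mul_assoc, ← mul_assoc]; exact hY
  have hXD : X - D ≠ 0 := by
    intro h0
    rw [h0, inv_zero, mul_zero, zero_mul] at hX'
    exact absurd hX' (by norm_num)
  have hYD : Y - D ≠ 0 := by
    intro h0
    rw [h0, inv_zero, mul_zero, zero_mul] at hY'
    exact absurd hY' (by norm_num)
  set Q : Quaternion ℝ := -(u * w⁻¹) with hQ_def
  have step : ∀ Z : Quaternion ℝ, Z - D ≠ 0 →
      u⁻¹ * (E - Z) * (Z - D)⁻¹ * w = -1 → E - Z = Q * (Z - D) := by
    intro Z hZD hZ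
    have h2 : (E - Z) * (Z - D)⁻¹ = -(u * w⁻¹) := by
      have h3 : u * (u⁻¹ * (E - Z) * (Z - D)⁻¹ * w) * w⁻¹ = u * (-1) * w⁻¹ := by rw [hZ]
      calc (E - Z) * (Z - D)⁻¹
          = u * (u⁻¹ * (E - Z) * (Z - D)⁻¹ * w) * w⁻¹ := by
            simp only [mul_assoc, mul_inv_cancel₀ hw, mul_one, mul_inv_cancel_left₀ hu]
        _ = u * (-1) * w⁻¹ := h3
        _ = -(u * w⁻¹) := by rw [mul_neg_one, neg_mul]
    calc E - Z = (E - Z) * (Z - D)⁻¹ * (Z - D) := by rw [inv_mul_cancel_right₀ hZD]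
      _ = Q * (Z - D) := by rw [h2, hQ_def]
  have hx := step X hXD hX'
  have hy := step Y hYD hY'
  have h5 : (1 + Q) * (X - Y) = 0 := by
    have e : Q * (X - Y) = (E - X) - (E - Y) := by
      have : X - Y = (X - D) - (Y - D) := by abel
      rw [this, mul_sub, ← hx, ← hy]
    rw [add_mul, one_mul, e]
    abel
  by_cases h1Q : 1 + Q = 0
  · exfalso
    have hQ1 : Q = -1 := eq_neg_of_add_eq_zero_right h1Q
    rw [hQ1, neg_one_mul, neg_sub] at hx
    exact hED (sub_left_inj.mp hx)
  · have := (mul_eq_zero.1 h5).resolve_left h1Q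
    exact sub_eq_zero.1 this

private lemma left_ratio_of_right_ratio
    (ρ c P₁ P₂ P₃ P₄ P₅ P₆ Q₅ : Quaternion ℝ) (hρ : ρ ≠ 0)
    (h₁ : star P₁ - star c ≠ 0) (h₂ : star P₂ - star c ≠ 0) (h₃ : star P₃ - star c ≠ 0)
    (h₄ : star P₄ - star c ≠ 0) (h₅ : star P₅ - star c ≠ 0) (h₆ : star P₆ - star c ≠ 0)
    (r₁ : P₁ = c + ρ * (star P₁ - star c)⁻¹) (r₂ : P₂ = c + ρ * (star P₂ - star c)⁻¹)
    (r₃ : P₃ = c + ρ * (star P₃ - star c)⁻¹) (r₄ : P₄ = c + ρ * (star P₄ - star c)⁻¹)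
    (r₆ : P₆ = c + ρ * (star P₆ - star c)⁻¹) (r₅ : Q₅ = c + ρ * (star P₅ - star c)⁻¹)
    (hM : (P₁ - P₂) * (P₂ - P₃)⁻¹ * (P₃ - P₄) * (P₄ - P₅)⁻¹ * (P₅ - P₆) * (P₆ - P₁)⁻¹ = -1) :
    (P₁ - P₆)⁻¹ * (P₆ - Q₅) * (Q₅ - P₄)⁻¹ * (P₄ - P₃) * (P₃ - P₂)⁻¹ * (P₂ - P₁) = -1 := by
  have h6 : ((star P₆ - star c) - (star P₁ - star c))⁻¹ * ((star P₅ - star c) - (star P₆ - star c)) *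
      ((star P₄ - star c) - (star P₅ - star c))⁻¹ * ((star P₃ - star c) - (star P₄ - star c)) *
      ((star P₂ - star c) - (star P₃ - star c))⁻¹ * ((star P₁ - star c) - (star P₂ - star c))
      = -1 := by
    have h := congrArg star hM
    simp only [qstar_mul, qstar_inv, qstar_sub, qstar_neg, qstar_one] at h
    simp only [qsub_cancel]
    simp only [qmul_assoc] at h ⊢
    exact h
  have e1 : P₁ - P₆ = ρ * (star P₁ - star c)⁻¹ - ρ * (star P₆ - star c)⁻¹ := by
    conv_lhs => rw [r₁, r₆]
    rw [add_sub_add_left_eq_sub]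
  have e2 : P₆ - Q₅ = ρ * (star P₆ - star c)⁻¹ - ρ * (star P₅ - star c)⁻¹ := by
    conv_lhs => rw [r₆, r₅]
    rw [add_sub_add_left_eq_sub]
  have e3 : Q₅ - P₄ = ρ * (star P₅ - star c)⁻¹ - ρ * (star P₄ - star c)⁻¹ := by
    conv_lhs => rw [r₅, r₄]
    rw [add_sub_add_left_eq_sub]
  have e4 : P₄ - P₃ = ρ * (star P₄ - star c)⁻¹ - ρ * (star P₃ - star c)⁻¹ := by
    conv_lhs => rw [r₄, r₃]
    rw [add_sub_add_left_eq_sub]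
  have e5 : P₃ - P₂ = ρ * (star P₃ - star c)⁻¹ - ρ * (star P₂ - star c)⁻¹ := by
    conv_lhs => rw [r₃, r₂]
    rw [add_sub_add_left_eq_sub]
  have e6 : P₂ - P₁ = ρ * (star P₂ - star c)⁻¹ - ρ * (star P₁ - star c)⁻¹ := by
    conv_lhs => rw [r₂, r₁]
    rw [add_sub_add_left_eq_sub]
  rw [e1, e2, e3, e4, e5, e6]
  exact telescope ρ _ _ _ _ _ _ hρ h₁ h₂ h₃ h₄ h₅ h₆ h6

private lemma coe_mul_star_inv (q : Quaternion ℝ) (s : ℝ) :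
    ((s : ℝ) : Quaternion ℝ) * (star q)⁻¹ = (s / ‖q‖ ^ 2) • q := by
  rw [Quaternion.inv_def, star_star, Quaternion.normSq_star, Quaternion.coe_mul_eq_smul,
    smul_smul, Quaternion.normSq_eq_norm_mul_self]
  congr 1
  rw [div_eq_mul_inv, sq]

private lemma pt_repr {c p : Quaternion ℝ} {r : ℝ} (hr : 0 < r) (h : ‖p - c‖ = r) :
    p = c + ((r ^ 2 : ℝ) : Quaternion ℝ) * (star (p - c))⁻¹ := by
  rw [coe_mul_star_inv, h]
  rw [div_self (by positivity), one_smul, add_sub_cancel]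

private lemma inv_repr (c p : Quaternion ℝ) (r : ℝ) :
    c + (r ^ 2 / ‖p - c‖ ^ 2) • (p - c) = c + ((r ^ 2 : ℝ) : Quaternion ℝ) * (star (p - c))⁻¹ := by
  rw [coe_mul_star_inv]

end Aux

theorem paired_configurations_related_by_sphere_inversion
    (Φ₁₂ Φ₁₃ Φ₁₄ Φ₂₃ Φ₂₄ Φ₃₄ Φ'₃₄ : Quaternion ℝ) (c : Quaternion ℝ) (r : ℝ)
    (hr : 0 < r)
    (hdist : List.Pairwise (· ≠ ·) [Φ₁₂, Φ₁₃, Φ₁₄, Φ₂₃, Φ₂₄])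
    (hspan : affineSpan ℝ ({Φ₁₂, Φ₁₃, Φ₁₄, Φ₂₃, Φ₂₄} : Set (Quaternion ℝ)) = ⊤)
    (hs₁₂ : ‖Φ₁₂ - c‖ = r) (hs₁₃ : ‖Φ₁₃ - c‖ = r) (hs₁₄ : ‖Φ₁₄ - c‖ = r)
    (hs₂₃ : ‖Φ₂₃ - c‖ = r) (hs₂₄ : ‖Φ₂₄ - c‖ = r)
    (hd₃₄ : Φ₃₄ ∉ ({Φ₁₂, Φ₁₃, Φ₁₄, Φ₂₃, Φ₂₄} : Set (Quaternion ℝ)))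
    (hd'₃₄ : Φ'₃₄ ∉ ({Φ₁₂, Φ₁₃, Φ₁₄, Φ₂₃, Φ₂₄} : Set (Quaternion ℝ)))
    (hc : Φ₃₄ ≠ c)
    (hM : rightMultiRatio Φ₁₄ Φ₁₂ Φ₂₄ Φ₂₃ Φ₃₄ Φ₁₃ = -1)
    (hMt : leftMultiRatio Φ₁₄ Φ₁₂ Φ₂₄ Φ₂₃ Φ'₃₄ Φ₁₃ = -1) :
    Φ'₃₄ = c + (r ^ 2 / ‖Φ₃₄ - c‖ ^ 2) • (Φ₃₄ - c) := by
  have hρ : ((r ^ 2 : ℝ) : Quaternion ℝ) ≠ 0 := by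
    rw [ne_eq, ← Quaternion.coe_zero, Quaternion.coe_inj]
    positivity
  have star_d : ∀ p : Quaternion ℝ, star p - star c = star (p - c) := fun p => (qstar_sub p c).symm
  have hne : ∀ p : Quaternion ℝ, ‖p - c‖ = r → star p - star c ≠ 0 := by
    intro p hp
    rw [star_d, star_ne_zero]
    intro h0
    rw [h0, norm_zero] at hp
    exact hr.ne hp
  have h₁ : star Φ₁₄ - star c ≠ 0 := hne _ hs₁₄
  have h₂ : star Φ₁₂ - star c ≠ 0 := hne _ hs₁₂
  have h₃ : star Φ₂₄ - star c ≠ 0 := hne _ hs₂₄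
  have h₄ : star Φ₂₃ - star c ≠ 0 := hne _ hs₂₃
  have h₆ : star Φ₁₃ - star c ≠ 0 := hne _ hs₁₃
  have h₅ : star Φ₃₄ - star c ≠ 0 := by
    rw [star_d, star_ne_zero, sub_ne_zero]
    exact hc
  have r₁ : Φ₁₄ = c + ((r ^ 2 : ℝ) : Quaternion ℝ) * (star Φ₁₄ - star c)⁻¹ := by
    rw [star_d]; exact pt_repr hr hs₁₄
  have r₂ : Φ₁₂ = c + ((r ^ 2 : ℝ) : Quaternion ℝ) * (star Φ₁₂ - star c)⁻¹ := by
    rw [star_d]; exact pt_repr hr hs₁₂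
  have r₃ : Φ₂₄ = c + ((r ^ 2 : ℝ) : Quaternion ℝ) * (star Φ₂₄ - star c)⁻¹ := by
    rw [star_d]; exact pt_repr hr hs₂₄
  have r₄ : Φ₂₃ = c + ((r ^ 2 : ℝ) : Quaternion ℝ) * (star Φ₂₃ - star c)⁻¹ := by
    rw [star_d]; exact pt_repr hr hs₂₃
  have r₆ : Φ₁₃ = c + ((r ^ 2 : ℝ) : Quaternion ℝ) * (star Φ₁₃ - star c)⁻¹ := by
    rw [star_d]; exact pt_repr hr hs₁₃
  obtain ⟨X₀, hX₀⟩ : ∃ x : Quaternion ℝ,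
      x = c + ((r ^ 2 : ℝ) : Quaternion ℝ) * (star Φ₃₄ - star c)⁻¹ := ⟨_, rfl⟩
  have key : (Φ₁₄ - Φ₁₃)⁻¹ * (Φ₁₃ - X₀) * (X₀ - Φ₂₃)⁻¹ * (Φ₂₃ - Φ₂₄) * (Φ₂₄ - Φ₁₂)⁻¹ *
      (Φ₁₂ - Φ₁₄) = -1 := by
    refine left_ratio_of_right_ratio _ c Φ₁₄ Φ₁₂ Φ₂₄ Φ₂₃ Φ₃₄ Φ₁₃ X₀ hρ
      h₁ h₂ h₃ h₄ h₅ h₆ r₁ r₂ r₃ r₄ r₆ hX₀ ?_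
    rw [rightMultiRatio] at hM
    exact hM
  simp only [List.pairwise_cons, List.mem_cons, List.not_mem_nil, or_false,
    List.Pairwise.nil, and_true, forall_eq_or_imp, forall_eq] at hdist
  obtain ⟨⟨h1213, h1214, h1223, h1224⟩, ⟨h1314, h1323, h1324⟩, ⟨h1423, h1424⟩, h2324, -⟩ := hdist
  have goal' : Φ'₃₄ = X₀ := by
    rw [leftMultiRatio] at hMt
    exact unique_sol (X := Φ'₃₄) (Y := X₀) (Ne.symm h1314) h2324 (Ne.symm h1224) h1214
      h1323 hMt key
  rw [goal', hX₀, star_d, inv_repr]
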